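/- Jacobson–Morozov in matrices: for every nonzero nilpotent complex n×n matrix X there exist matrices H, Y in gl_n(C) with [H,X] = 2X, [H,Y] = −2Y, and [X,Y] = H, i.e., (H, X, Y) is an sl2-triple. -/

import Mathlib

open Polynomial Module DirectSum

noncomputable section JM

variable (M : Type) [AddCommGroup M] [Module ℂ M] [Module ℂ[X] M] [IsScalarTower ℂ ℂ[X] M]

/-- multiplication by X as a ℂ-linear endomorphism -/
def JMXop : M →ₗ[ℂ] M where
  toFun m := (X : ℂ[X]) • m
  map_add' := smul_add _
  map_smul' c m := by
    haveI : SMulCommClass ℂ ℂ[X] M := IsScalarTower.to_smulCommClass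
    exact smul_comm (X : ℂ[X]) c m

@[simp] lemma JMXop_apply (m : M) : JMXop M m = (X : ℂ[X]) • m := rfl

def JMSL2 : Prop :=
  ∃ H Y : M →ₗ[ℂ] M,
    H * JMXop M - JMXop M * H = 2 • JMXop M ∧
    H * Y - Y * H = (-2 : ℤ) • Y ∧
    JMXop M * Y - Y * JMXop M = H

variable {M} {N : Type} [AddCommGroup N] [Module ℂ N] [Module ℂ[X] N] [IsScalarTower ℂ ℂ[X] N]

lemma JMSL2.congr (e : M ≃ₗ[ℂ[X]] N) (h : JMSL2 M) : JMSL2 N := by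
  obtain ⟨H, Y, h1, h2, h3⟩ := h
  let e' : M ≃ₗ[ℂ] N := e.restrictScalars ℂ
  have hs : ∀ n : N, e'.symm ((X : ℂ[X]) • n) = (X : ℂ[X]) • e'.symm n := fun n =>
    e.symm.map_smul (X : ℂ[X]) n
  have hs' : ∀ m : M, e' ((X : ℂ[X]) • m) = (X : ℂ[X]) • e' m := fun m =>
    e.map_smul (X : ℂ[X]) m
  refine ⟨e'.conj H, e'.conj Y, ?_, ?_, ?_⟩
  · ext n
    have := congrArg (fun g => e' (g (e'.symm n))) h1
    simpa [LinearEquiv.conj_apply, Module.End.mul_apply, hs, hs', map_sub] using this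
  · ext n
    have := congrArg (fun g => e' (g (e'.symm n))) h2
    simpa [LinearEquiv.conj_apply, Module.End.mul_apply, map_sub] using this
  · ext n
    have := congrArg (fun g => e' (g (e'.symm n))) h3
    simpa [LinearEquiv.conj_apply, Module.End.mul_apply, hs, hs', map_sub] using this


lemma JMSL2.directSum {ι : Type} [DecidableEq ι] (A : ι → Type)
    [∀ i, AddCommGroup (A i)] [∀ i, Module ℂ (A i)] [∀ i, Module ℂ[X] (A i)]
    [∀ i, IsScalarTower ℂ ℂ[X] (A i)] (h : ∀ i, JMSL2 (A i)) :
    JMSL2 (⨁ i, A i) := by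
  choose H Y h1 h2 h3 using h
  let Ht : (⨁ i, A i) →ₗ[ℂ] ⨁ i, A i :=
    DirectSum.toModule ℂ ι _ fun i => (DirectSum.lof ℂ ι A i).comp (H i)
  let Yt : (⨁ i, A i) →ₗ[ℂ] ⨁ i, A i :=
    DirectSum.toModule ℂ ι _ fun i => (DirectSum.lof ℂ ι A i).comp (Y i)
  have hX : ∀ (i) (a : A i),
      JMXop _ (DirectSum.lof ℂ ι A i a) = DirectSum.lof ℂ ι A i (JMXop _ a) := by
    intro i a
    exact ((DirectSum.lof ℂ[X] ι A i).map_smul (X : ℂ[X]) a).symm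
  have hHt : ∀ (i) (a : A i),
      Ht (DirectSum.lof ℂ ι A i a) = DirectSum.lof ℂ ι A i (H i a) := fun i a =>
    DirectSum.toModule_lof ℂ i a
  have hYt : ∀ (i) (a : A i),
      Yt (DirectSum.lof ℂ ι A i a) = DirectSum.lof ℂ ι A i (Y i a) := fun i a =>
    DirectSum.toModule_lof ℂ i a
  refine ⟨Ht, Yt, ?_, ?_, ?_⟩
  · refine DirectSum.linearMap_ext ℂ fun i => LinearMap.ext fun a => ?_
    have := congrArg (lof ℂ ι A i) (LinearMap.congr_fun (h1 i) a)
    simp only [Module.End.mul_apply, LinearMap.sub_apply, LinearMap.smul_apply,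
      map_sub, map_nsmul] at this
    simpa [hX, hHt, hYt] using this
  · refine DirectSum.linearMap_ext ℂ fun i => LinearMap.ext fun a => ?_
    have := congrArg (lof ℂ ι A i) (LinearMap.congr_fun (h2 i) a)
    simp only [Module.End.mul_apply, LinearMap.sub_apply, LinearMap.smul_apply,
      map_sub, map_zsmul] at this
    simpa [hX, hHt, hYt, two_nsmul, two_zsmul] using this
  · refine DirectSum.linearMap_ext ℂ fun i => LinearMap.ext fun a => ?_
    have := congrArg (lof ℂ ι A i) (LinearMap.congr_fun (h3 i) a)
    simp only [Module.End.mul_apply, LinearMap.sub_apply, map_sub] at this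
    simpa [hX, hHt, hYt] using this


lemma JMSL2.block (k : ℕ) : JMSL2 (ℂ[X] ⧸ (Submodule.span ℂ[X] {(X : ℂ[X])^k})) := by
  set A := ℂ[X] ⧸ (Submodule.span ℂ[X] {(X : ℂ[X])^k}) with hA
  let μ : ℕ → A := fun t => Submodule.Quotient.mk ((X : ℂ[X])^t)
  have hμs : ∀ t, (X : ℂ[X]) • μ t = μ (t+1) := by
    intro t
    show _ = Submodule.Quotient.mk ((X : ℂ[X])^(t+1))
    rw [← Submodule.Quotient.mk_smul]
    congr 1
    rw [smul_eq_mul, ← pow_succ']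
  have hμk : μ k = 0 := (Submodule.Quotient.mk_eq_zero _).mpr (Submodule.mem_span_singleton_self _)
  let b0 := AdjoinRoot.powerBasis' (g := (X : ℂ[X])^k) (monic_X_pow k)
  have hdim : b0.dim = k := by simp [b0, natDegree_X_pow]
  let b : Basis (Fin k) ℂ A := b0.basis.reindex (finCongr hdim)
  have hb : ∀ j : Fin k, b j = μ (j : ℕ) := by
    intro j
    show b0.basis.reindex (finCongr hdim) j = μ (j : ℕ)
    rw [Module.Basis.reindex_apply, b0.basis_eq_pow]
    have hg : b0.gen = AdjoinRoot.root ((X : ℂ[X])^k) := rfl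
    have hj : (((finCongr hdim).symm j : Fin b0.dim) : ℕ) = (j : ℕ) := rfl
    rw [hg, hj, ← AdjoinRoot.mk_X, ← map_pow]
    rfl
  let c : Fin k → ℂ := fun j => 2*(j:ℕ) + 1 - k
  let d : Fin k → ℂ := fun j => (j:ℕ) * ((k:ℂ) - (j:ℕ))
  let HH : A →ₗ[ℂ] A := b.constr ℂ (fun j => c j • b j)
  let YY : A →ₗ[ℂ] A := b.constr ℂ (fun j => d j • μ ((j:ℕ) - 1))
  have hHμ : ∀ t, t < k → HH (μ t) = (2*(t:ℂ) + 1 - k) • μ t := by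
    intro t ht
    have := b.constr_basis ℂ (fun j => c j • b j) ⟨t, ht⟩
    rwa [hb ⟨t, ht⟩] at this
  have hYμ : ∀ t, t < k → YY (μ t) = ((t:ℂ) * ((k:ℂ) - t)) • μ (t - 1) := by
    intro t ht
    have := b.constr_basis ℂ (fun j => d j • μ ((j:ℕ) - 1)) ⟨t, ht⟩
    rwa [hb ⟨t, ht⟩] at this
  refine ⟨HH, YY, ?_, ?_, ?_⟩
  · refine b.ext fun j => ?_
    obtain ⟨t, ht⟩ := j
    simp only [Module.End.mul_apply, LinearMap.sub_apply, LinearMap.smul_apply, hb, JMXop_apply,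
      Fin.val_mk]
    rw [JMXop_apply, JMXop_apply]
    rw [hμs, hHμ t ht, smul_comm, hμs]
    rcases Nat.lt_or_ge (t+1) k with h1 | h1
    · rw [hHμ _ h1, ← sub_smul, ← Nat.cast_smul_eq_nsmul ℂ 2]
      congr 1
      push_cast
      ring
    · have : μ (t+1) = 0 := by
        have hk : t + 1 = k := le_antisymm ht h1
        rw [hk, hμk]
      rw [this]
      simp
  · refine b.ext fun j => ?_
    obtain ⟨t, ht⟩ := j
    simp only [Module.End.mul_apply, LinearMap.sub_apply, LinearMap.smul_apply, hb, Fin.val_mk]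
    rw [hYμ t ht, hHμ t ht, map_smul, map_smul, ← Int.cast_smul_eq_zsmul ℂ, hYμ t ht]
    rcases Nat.eq_zero_or_pos t with h0 | h0
    · subst h0; simp
    · have htm : t - 1 < k := lt_of_le_of_lt (Nat.sub_le t 1) ht
      rw [hHμ _ htm, smul_comm ((t:ℂ) * ((k:ℂ) - t))]
      rw [smul_smul, smul_smul, smul_smul, ← sub_smul]
      congr 1
      have hc : ((t - 1 : ℕ) : ℂ) = (t : ℂ) - 1 := by
        push_cast [h0]
        ring
      rw [hc]
      push_cast
      ring
  · refine b.ext fun j => ?_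
    obtain ⟨t, ht⟩ := j
    simp only [Module.End.mul_apply, LinearMap.sub_apply, hb, JMXop_apply, Fin.val_mk]
    rw [JMXop_apply, JMXop_apply]
    rw [hμs, hYμ t ht, hHμ t ht, smul_comm, hμs]
    rcases Nat.eq_zero_or_pos t with h0 | h0
    · subst h0
      simp only [Nat.cast_zero, zero_mul, zero_smul, zero_add, Nat.zero_sub]
      rcases Nat.lt_or_ge 1 k with h1 | h1
      · rw [hYμ 1 h1]
        push_cast
        rw [zero_sub, ← neg_smul]
        congr 1
        ring
      · have hk : k = 1 := le_antisymm h1 ht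
        have hμ1 : μ 1 = 0 := hk ▸ hμk
        simp [hμ1, hk]
    · have h11 : t - 1 + 1 = t := Nat.succ_pred_eq_of_pos h0
      rw [h11]
      rcases Nat.lt_or_ge (t+1) k with h1 | h1
      · rw [hYμ _ h1]
        have hc1 : ((t + 1 : ℕ) : ℂ) = (t:ℂ) + 1 := by push_cast; ring
        have hc2 : (t + 1 - 1 : ℕ) = t := rfl
        rw [hc2, ← sub_smul]
        congr 1
        push_cast
        ring
      · have hk : t + 1 = k := le_antisymm ht h1
        have : μ (t+1) = 0 := by rw [hk, hμk]
        rw [this, map_zero, sub_zero]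
        congr 1
        have : (k : ℂ) = (t : ℂ) + 1 := by rw [← hk]; push_cast; ring
        rw [this]
        ring


lemma JM.endTriple (V : Type) [AddCommGroup V] [Module ℂ V] [Module.Finite ℂ V]
    (f : V →ₗ[ℂ] V) (hf : IsNilpotent f) :
    ∃ h y : V →ₗ[ℂ] V,
      h * f - f * h = 2 • f ∧ h * y - y * h = (-2 : ℤ) • y ∧ f * y - y * f = h := by
  obtain ⟨nn, hnn⟩ := hf
  have hann : ∀ m : Module.AEval' f, ((X : ℂ[X])^nn) • m = 0 := by
    intro m
    have h0 : ((X : ℂ[X])^nn) • m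
        = Module.AEval.of ℂ V f ((aeval f ((X : ℂ[X])^nn)) • ((Module.AEval.of ℂ V f).symm m)) := by
      rw [Module.AEval.of_aeval_smul, LinearEquiv.apply_symm_apply]
    rw [h0, map_pow, aeval_X, hnn]
    simp
  have htor : Module.IsTorsion ℂ[X] (Module.AEval' f) := fun m =>
    ⟨⟨(X : ℂ[X])^nn, mem_nonZeroDivisors_of_ne_zero (pow_ne_zero _ X_ne_zero)⟩, hann m⟩
  obtain ⟨ι, hfin, p, hp, e, ⟨g⟩⟩ :=
    Module.equiv_directSum_of_isTorsion (R := ℂ[X]) (M := Module.AEval' f) htor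
  classical
  have hass : ∀ i, (Submodule.span ℂ[X] {p i ^ e i})
      = (Submodule.span ℂ[X] {(X : ℂ[X]) ^ e i}) := by
    intro i
    rcases Nat.eq_zero_or_pos (e i) with h0 | h0
    · rw [h0]; simp
    · let Mfam : ι → Type := fun i => ℂ[X] ⧸ Submodule.span ℂ[X] {p i ^ e i}
      let z : Mfam i := Submodule.Quotient.mk (1 : ℂ[X])
      have hz : ((X : ℂ[X])^nn) • (DirectSum.lof ℂ[X] ι Mfam i z) = 0 := by
        have h1 := congrArg g (hann (g.symm (DirectSum.lof ℂ[X] ι Mfam i z)))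
        rw [map_smul, LinearEquiv.apply_symm_apply, map_zero] at h1
        exact h1
      rw [← map_smul] at hz
      have hz2 : ((X : ℂ[X])^nn) • z = 0 := by
        apply DirectSum.of_injective (β := Mfam) i
        rw [map_zero]
        exact hz
      have hmem : ((X : ℂ[X])^nn) ∈ Submodule.span ℂ[X] {p i ^ e i} := by
        rw [← Submodule.Quotient.mk_eq_zero]
        have h5 : ((X : ℂ[X])^nn) • (1 : ℂ[X]) = (X : ℂ[X])^nn := (smul_eq_mul ..).trans (mul_one _)
        rw [← h5, Submodule.Quotient.mk_smul]
        exact hz2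
      have hdvd : p i ^ e i ∣ (X : ℂ[X])^nn := Ideal.mem_span_singleton.mp hmem
      have hprime : Prime (p i) := (UniqueFactorizationMonoid.irreducible_iff_prime.mp (hp i))
      have hpX : p i ∣ (X : ℂ[X]) :=
        hprime.dvd_of_dvd_pow (dvd_trans (dvd_pow_self (p i) h0.ne') hdvd)
      have hassoc : Associated (p i) (X : ℂ[X]) := (hp i).associated_of_dvd irreducible_X hpX
      exact Ideal.span_singleton_eq_span_singleton.mpr (hassoc.pow_pow)
  have hsl : JMSL2 (Module.AEval' f) := by
    refine JMSL2.congr g.symm (JMSL2.directSum _ fun i => ?_)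
    exact JMSL2.congr (Submodule.quotEquivOfEq _ _ (hass i).symm) (JMSL2.block (e i))
  obtain ⟨H, Y, h1, h2, h3⟩ := hsl
  let o : V ≃ₗ[ℂ] Module.AEval' f := Module.AEval'.of f
  have hXo : ∀ v : V, JMXop (Module.AEval' f) (o v) = o (f v) := fun v =>
    Module.AEval'.X_smul_of f v
  have hXo' : ∀ w : Module.AEval' f, f (o.symm w) = o.symm (JMXop (Module.AEval' f) w) := by
    intro w
    have hw := hXo (o.symm w)
    rw [o.apply_symm_apply] at hw
    rw [hw, o.symm_apply_apply]
  refine ⟨o.symm.conj H, o.symm.conj Y, ?_, ?_, ?_⟩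
  · ext v
    have hpt := congrArg o.symm (LinearMap.congr_fun h1 (o v))
    simp only [Module.End.mul_apply, LinearMap.sub_apply, LinearMap.smul_apply, map_sub,
      map_nsmul] at hpt
    simp only [LinearMap.sub_apply, Module.End.mul_apply, LinearMap.smul_apply,
      LinearEquiv.conj_apply, LinearMap.comp_apply, LinearEquiv.coe_coe, LinearEquiv.symm_symm,
      o.symm_apply_apply]
    rw [hXo', show o (f v) = JMXop (Module.AEval' f) (o v) from (hXo v).symm, hpt,
      hXo v, o.symm_apply_apply]
  · ext v
    have hpt := congrArg o.symm (LinearMap.congr_fun h2 (o v))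
    simp only [Module.End.mul_apply, LinearMap.sub_apply, LinearMap.smul_apply, map_sub,
      map_zsmul] at hpt
    simpa [LinearEquiv.conj_apply, Module.End.mul_apply, LinearEquiv.symm_symm, neg_smul,
      two_nsmul, two_zsmul, o.symm_apply_apply] using hpt
  · ext v
    have hpt := congrArg o.symm (LinearMap.congr_fun h3 (o v))
    simp only [Module.End.mul_apply, LinearMap.sub_apply, map_sub] at hpt
    simp only [LinearMap.sub_apply, Module.End.mul_apply, LinearEquiv.conj_apply,
      LinearMap.comp_apply, LinearEquiv.coe_coe, LinearEquiv.symm_symm, o.symm_apply_apply]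
    rw [hXo', show o (f v) = JMXop (Module.AEval' f) (o v) from (hXo v).symm, hpt]

end JM

/-- Jacobson–Morozov for matrices: every nonzero nilpotent complex
`n × n` matrix `X` embeds in an `sl₂`-triple `(H, X, Y)` in `gl_n(ℂ)`:
`[H,X] = 2X`, `[H,Y] = -2Y`, `[X,Y] = H`, where `[A,B] = AB - BA`. -/
theorem stmt9 (n : ℕ) (X : Matrix (Fin n) (Fin n) ℂ)
    (hX : IsNilpotent X) (hX0 : X ≠ 0) :
    ∃ H Y : Matrix (Fin n) (Fin n) ℂ,
      H * X - X * H = 2 • X ∧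
      H * Y - Y * H = (-2 : ℤ) • Y ∧
      X * Y - Y * X = H := by
  let E := Matrix.toLinAlgEquiv' (R := ℂ) (n := Fin n)
  obtain ⟨h, y, h1, h2, h3⟩ := JM.endTriple (Fin n → ℂ) (E X) (hX.map E)
  refine ⟨E.symm h, E.symm y, ?_, ?_, ?_⟩
  · apply E.injective
    simp only [map_sub, map_mul, map_nsmul, AlgEquiv.apply_symm_apply]
    exact h1
  · apply E.injective
    simp only [map_sub, map_mul, map_zsmul, AlgEquiv.apply_symm_apply]
    exact h2
  · apply E.injective
    simp only [map_sub, map_mul, AlgEquiv.apply_symm_apply]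
    exact h3
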